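/- Let R be a commutative Noetherian ring of Krull dimension 2, with finitely many maximal ideals all of height 2, and let Q ⊋ Q' ⊋ Q'' be a chain of primes. Let 𝓗 be the finite set consisting of the minimal primes of R together with the height-one primes dominating at least two minimal primes. Then there exist infinitely many height-one primes Q* with Q'' ⊂ Q* ⊂ Q such that Q is the unique prime strictly containing Q* and Q'' is the unique prime strictly contained in Q*. -/

import Mathlib

open Ideal Submodule

theorem myIsArtinian_of_smul_eq_bot {B M : Type*} [CommRing B] [AddCommGroup M]
    [Module B M] [IsNoetherian B M] (m : Ideal B) (hm : m.IsMaximal)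
    (h : m • (⊤ : Submodule B M) = ⊥) : IsArtinian B M := by
  have hkill : ∀ (a : B) (y : M), a ∈ m → a • y = 0 := by
    intro a y ha
    have : a • y ∈ m • (⊤ : Submodule B M) := Submodule.smul_mem_smul ha trivial
    rw [h] at this; simpa using this
  have hss : IsSemisimpleModule B M := by
    apply IsSemisimpleModule.of_sSup_simples_eq_top
    rw [eq_top_iff]
    intro y _
    rcases eq_or_ne y 0 with rfl | hy
    · exact zero_mem _
    · have hsimple : IsSimpleModule B (Submodule.span B {y}) := by
        rw [LinearMap.span_singleton_eq_range]
        have hker : LinearMap.ker (LinearMap.toSpanSingleton B M y) = m := by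
          refine (hm.eq_of_le ?_ ?_).symm
          · intro htop
            have : (1 : B) ∈ LinearMap.ker (LinearMap.toSpanSingleton B M y) := by
              rw [htop]; trivial
            simp only [LinearMap.mem_ker, LinearMap.toSpanSingleton_apply, one_smul] at this
            exact hy this
          · intro a ha
            simp only [LinearMap.mem_ker, LinearMap.toSpanSingleton_apply]
            exact hkill a y ha
        have : IsSimpleModule B (B ⧸ LinearMap.ker (LinearMap.toSpanSingleton B M y)) := by
          rw [hker, isSimpleModule_iff_isCoatom]
          exact hm.out
        exact IsSimpleModule.congr
          (LinearMap.quotKerEquivRange (LinearMap.toSpanSingleton B M y)).symm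
      have hmem : Submodule.span B {y} ∈ {S : Submodule B M | IsSimpleModule B S} := hsimple
      exact le_sSup hmem (Submodule.mem_span_singleton_self y)
  have : Module.Finite B M := ⟨IsNoetherian.noetherian ⊤⟩
  infer_instance

theorem myIsArtinian_of_pow_smul_eq_bot {B : Type*} [CommRing B] (m : Ideal B)
    (hm : m.IsMaximal) :
    ∀ (k : ℕ) (M : Type*) [AddCommGroup M] [Module B M] [IsNoetherian B M],
      m ^ k • (⊤ : Submodule B M) = ⊥ → IsArtinian B M := by
  intro k
  induction k with
  | zero =>
    intro M _ _ _ h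
    rw [pow_zero, Ideal.one_eq_top, Submodule.top_smul] at h
    have : Subsingleton M := by
      refine subsingleton_of_forall_eq 0 fun y => ?_
      have : y ∈ (⊥ : Submodule B M) := h ▸ trivial
      simpa using this
    haveI : Subsingleton (Submodule B M) := by
      constructor; intro S T; ext z; rw [Subsingleton.elim z 0]; simp
    exact ⟨Finite.wellFounded_of_trans_of_irrefl _⟩
  | succ k ih =>
    intro M _ _ _ h
    have hsplit : m ^ k • m • (⊤ : Submodule B M) = ⊥ := by
      rw [← Submodule.smul_assoc, Ideal.smul_eq_mul, ← pow_succ, h]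
    set N : Submodule B M := m • ⊤ with hN
    have hNart : IsArtinian B N := by
      apply ih
      have hinj : Function.Injective N.subtype := Subtype.val_injective
      rw [← Submodule.map_injective_of_injective hinj |>.eq_iff]
      rw [Submodule.map_smul'', Submodule.map_top, Submodule.range_subtype, Submodule.map_bot]
      exact hsplit
    have hQart : IsArtinian B (M ⧸ N) := by
      apply myIsArtinian_of_smul_eq_bot m hm
      have : (⊤ : Submodule B (M ⧸ N)) = Submodule.map N.mkQ ⊤ := by
        rw [Submodule.map_top, Submodule.range_mkQ]
      rw [this, ← Submodule.map_smul'']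
      rw [eq_bot_iff, Submodule.map_le_iff_le_comap]
      intro z hz
      simp only [Submodule.mem_comap, Submodule.mem_bot, Submodule.mkQ_apply,
        Submodule.Quotient.mk_eq_zero]
      exact hz
    exact (isArtinian_iff_submodule_quotient N).mpr ⟨hNart, hQart⟩

/-- Krull's principal ideal theorem, core contradiction form. -/
theorem pit_core {A : Type*} [CommRing A] [IsNoetherianRing A] (x : A) (P W W' : Ideal A)
    (hP : P ∈ (Ideal.span {x}).minimalPrimes) (hW : W.IsPrime) (hW' : W'.IsPrime)
    (hWP : W < P) (hW'W : W' < W) : False := by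
  haveI hPp : P.IsPrime := hP.1.1
  set S := Localization.AtPrime P with hS
  let φ := algebraMap A S
  haveI : IsNoetherianRing S := IsLocalization.isNoetherianRing P.primeCompl S ‹_›
  set m := IsLocalRing.maximalIdeal S with hm
  have hmapP : P.map φ = m := Localization.AtPrime.map_eq_maximalIdeal
  have hxP : x ∈ P := hP.1.2 (Ideal.subset_span rfl)
  have hxm : φ x ∈ m := hmapP ▸ Ideal.mem_map_of_mem φ hxP
  -- every prime of S containing φ x is m
  have claim1 : ∀ Q : Ideal S, Q.IsPrime → φ x ∈ Q → Q = m := by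
    intro Q hQ hxQ
    have hd := (IsLocalization.isPrime_iff_isPrime_disjoint P.primeCompl S Q).mp hQ
    have hcle : Q.comap φ ≤ P := by
      intro a ha
      by_contra hc
      exact Set.disjoint_left.mp hd.2 hc ha
    have hPle : P ≤ Q.comap φ := by
      refine hP.2 ⟨hd.1, ?_⟩ hcle
      rw [Ideal.span_le, Set.singleton_subset_iff]
      exact hxQ
    have hQP : Q.comap φ = P := le_antisymm hcle hPle
    calc Q = (Q.comap φ).map φ := (IsLocalization.map_comap P.primeCompl S Q).symm
      _ = m := by rw [hQP, hmapP]
  have hrad : (Ideal.span {φ x}).radical = m := by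
    rw [Ideal.radical_eq_sInf]
    apply le_antisymm
    · refine sInf_le ⟨?_, (IsLocalRing.maximalIdeal.isMaximal S).isPrime⟩
      rw [Ideal.span_le, Set.singleton_subset_iff]; exact hxm
    · refine le_sInf ?_
      rintro J ⟨hle, hJp⟩
      exact (claim1 J hJp (hle (Ideal.subset_span rfl))).ge
  obtain ⟨k, hk⟩ : ∃ k, m ^ k ≤ Ideal.span {φ x} := by
    have := Ideal.exists_radical_pow_le_of_fg (Ideal.span {φ x}) (IsNoetherian.noetherian _)
    rwa [hrad] at this
  -- the image primes
  have hdisjW : Disjoint (P.primeCompl : Set A) (W : Set A) :=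
    Set.disjoint_left.mpr fun a ha ha' => ha (hWP.le ha')
  have hdisjW' : Disjoint (P.primeCompl : Set A) (W' : Set A) :=
    Set.disjoint_left.mpr fun a ha ha' => ha (hWP.le (hW'W.le ha'))
  set w := W.map φ with hw
  set w' := W'.map φ with hw'
  have hwp : w.IsPrime := IsLocalization.isPrime_of_isPrime_disjoint P.primeCompl S W hW hdisjW
  have hw'p : w'.IsPrime :=
    IsLocalization.isPrime_of_isPrime_disjoint P.primeCompl S W' hW' hdisjW'
  have hcomapw : w.comap φ = W :=
    IsLocalization.comap_map_of_isPrime_disjoint P.primeCompl S hW hdisjW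
  have hcomapw' : w'.comap φ = W' :=
    IsLocalization.comap_map_of_isPrime_disjoint P.primeCompl S hW' hdisjW'
  have hxnw : φ x ∉ w := by
    intro hc
    have := claim1 w hwp hc
    have h3 : Ideal.comap φ m = P := Localization.AtPrime.comap_maximalIdeal
    apply hWP.ne
    rw [← hcomapw, this, h3]
  haveI : w.IsPrime := hwp
  set T := Localization.AtPrime w with hT
  let ψ := algebraMap S T
  haveI : IsNoetherianRing T := IsLocalization.isNoetherianRing w.primeCompl T ‹_›
  set sp : ℕ → Ideal S := fun n => ((w ^ n).map ψ).comap ψ with hsp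
  have hspanti : ∀ {a b : ℕ}, a ≤ b → sp b ≤ sp a := by
    intro a b hab
    exact Ideal.comap_mono (Ideal.map_mono (Ideal.pow_le_pow_right hab))
  set J := Ideal.span {φ x} with hJ
  have hJm : J ≤ m := by rw [hJ, Ideal.span_le, Set.singleton_subset_iff]; exact hxm
  -- Artinian quotient
  haveI hart : IsArtinian S (S ⧸ J) := by
    apply myIsArtinian_of_pow_smul_eq_bot m (IsLocalRing.maximalIdeal.isMaximal S) k
    have h1 : (⊤ : Submodule S (S ⧸ J)) = Submodule.map (Submodule.mkQ (J : Submodule S S)) ⊤ := by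
      rw [Submodule.map_top, Submodule.range_mkQ]
    rw [h1, ← Submodule.map_smul'']
    rw [eq_bot_iff, Submodule.map_le_iff_le_comap]
    intro z hz
    simp only [Submodule.mem_comap, Submodule.mem_bot, Submodule.mkQ_apply,
      Submodule.Quotient.mk_eq_zero]
    have : m ^ k • (⊤ : Submodule S S) = m ^ k * ⊤ := Ideal.smul_eq_mul _ _
    rw [this, Ideal.mul_top] at hz
    exact hk hz
  -- stabilization
  obtain ⟨n, hn⟩ := IsArtinian.monotone_stabilizes
    (⟨fun n => OrderDual.toDual (Submodule.map (Submodule.mkQ (J : Submodule S S)) (sp n)),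
      fun a b hab => Submodule.map_mono (hspanti hab)⟩ : ℕ →o (Submodule S (S ⧸ J))ᵒᵈ)
  have heq : J ⊔ sp n = J ⊔ sp (n + 1) := by
    have h0 : Submodule.map (Submodule.mkQ (J : Submodule S S)) (sp n)
        = Submodule.map (Submodule.mkQ (J : Submodule S S)) (sp (n + 1)) :=
      congrArg OrderDual.ofDual (hn (n + 1) (Nat.le_succ n))
    have h2 := congrArg (Submodule.comap (Submodule.mkQ (J : Submodule S S))) h0
    rwa [Submodule.comap_map_mkQ, Submodule.comap_map_mkQ] at h2
  -- colon step
  have hstep : sp n ≤ sp (n + 1) ⊔ m • sp n := by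
    intro f hf
    have hf2 : f ∈ sp (n + 1) ⊔ J := by
      rw [sup_comm, ← heq]
      exact Submodule.mem_sup_right hf
    obtain ⟨g, hg, h, hh, rfl⟩ := Submodule.mem_sup.mp hf2
    obtain ⟨a, rfl⟩ := Ideal.mem_span_singleton'.mp hh
    have hax : a * φ x ∈ sp n := by
      have : (g + a * φ x) - g ∈ sp n := (sp n).sub_mem hf (hspanti (Nat.le_succ n) hg)
      simpa using this
    have haw : a ∈ sp n := by
      have hu : IsUnit (ψ (φ x)) := IsLocalization.map_units T (⟨φ x, hxnw⟩ : w.primeCompl)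
      have h1 : ψ (a * φ x) ∈ (w ^ n).map ψ := Ideal.mem_comap.mp hax
      rw [_root_.map_mul] at h1
      obtain ⟨u, hu⟩ := hu
      have h2 : ψ a = ψ a * ψ (φ x) * ↑u⁻¹ := by
        rw [← hu, mul_assoc, Units.mul_inv, mul_one]
      show a ∈ Ideal.comap ψ (Ideal.map ψ (w ^ n))
      rw [Ideal.mem_comap, h2]
      exact Ideal.mul_mem_right _ _ h1
    refine Submodule.mem_sup.mpr ⟨g, hg, a * φ x, ?_, rfl⟩
    rw [Ideal.smul_eq_mul]
    have h5 := Ideal.mul_mem_mul hxm haw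
    rwa [mul_comm (φ x) a] at h5
  have hspeq : sp n = sp (n + 1) :=
    le_antisymm
      (Submodule.le_of_le_smul_of_le_jacobson_bot (IsNoetherian.noetherian _)
        (IsLocalRing.maximalIdeal_le_jacobson ⊥) hstep)
      (hspanti (Nat.le_succ n))
  -- push to T
  have hmapsp : ∀ j : ℕ, (sp j).map ψ = (w.map ψ) ^ j := by
    intro j
    show Ideal.map ψ (Ideal.comap ψ (Ideal.map ψ (w ^ j))) = _
    rw [IsLocalization.map_comap w.primeCompl T, Ideal.map_pow]
  have hpow : (w.map ψ) ^ n = (w.map ψ) ^ (n + 1) := by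
    rw [← hmapsp, ← hmapsp, hspeq]
  have hmwmax : w.map ψ = IsLocalRing.maximalIdeal T := Localization.AtPrime.map_eq_maximalIdeal
  have hbot : (w.map ψ) ^ n = ⊥ := by
    refine Submodule.eq_bot_of_le_smul_of_le_jacobson_bot (w.map ψ) _
      (IsNoetherian.noetherian _) ?_ ?_
    · rw [Ideal.smul_eq_mul, ← pow_succ', ← hpow]
    · rw [hmwmax]; exact IsLocalRing.maximalIdeal_le_jacobson ⊥
  -- w' in T
  have hdisj2 : Disjoint (w.primeCompl : Set S) (w' : Set S) :=
    Set.disjoint_left.mpr fun a ha ha' => ha (Ideal.map_mono hW'W.le ha')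
  have hw'Tp : (w'.map ψ).IsPrime :=
    IsLocalization.isPrime_of_isPrime_disjoint w.primeCompl T w' hw'p hdisj2
  have hle2 : w.map ψ ≤ w'.map ψ := by
    have : (w.map ψ) ^ n ≤ w'.map ψ := by rw [hbot]; exact bot_le
    exact hw'Tp.le_of_pow_le this
  have hcomapw2 : (w.map ψ).comap ψ = w :=
    IsLocalization.comap_map_of_isPrime_disjoint w.primeCompl T hwp
      (Set.disjoint_left.mpr fun a ha ha' => ha ha')
  have hcomapw'2 : (w'.map ψ).comap ψ = w' :=
    IsLocalization.comap_map_of_isPrime_disjoint w.primeCompl T hw'p hdisj2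
  have hww' : w ≤ w' := by
    rw [← hcomapw2, ← hcomapw'2]
    exact Ideal.comap_mono hle2
  have : W ≤ W' := by
    rw [← hcomapw, ← hcomapw']
    exact Ideal.comap_mono hww'
  exact hW'W.not_ge this

theorem pit_three {B : Type*} [CommRing B] [IsNoetherianRing B] (x : B)
    (P0 P1 P2 : Ideal B) (h0 : P0.IsPrime) (h1 : P1.IsPrime) (h2 : P2.IsPrime)
    (l01 : P0 < P1) (l12 : P1 < P2)
    (hmin : P2 ∈ (P0 ⊔ Ideal.span {x}).minimalPrimes) : False := by
  haveI := h0
  set A := B ⧸ P0 with hA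
  let mk : B →+* A := Ideal.Quotient.mk P0
  have hsurj : Function.Surjective mk := Ideal.Quotient.mk_surjective
  have hker : RingHom.ker mk = P0 := Ideal.mk_ker
  have hcomapmap : ∀ (I : Ideal B), P0 ≤ I → (I.map mk).comap mk = I := by
    intro I hI
    rw [Ideal.comap_map_of_surjective mk hsurj, ← RingHom.ker_eq_comap_bot, hker,
      sup_eq_left.mpr hI]
  have hP2map : (P2.map mk).IsPrime :=
    Ideal.map_isPrime_of_surjective hsurj (hker.le.trans (l01.le.trans l12.le))
  have hP1map : (P1.map mk).IsPrime :=
    Ideal.map_isPrime_of_surjective hsurj (hker.le.trans l01.le)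
  have hlt : P1.map mk < P2.map mk := by
    refine lt_of_le_of_ne (Ideal.map_mono l12.le) fun hEq => ?_
    have := congrArg (Ideal.comap mk) hEq
    rw [hcomapmap P1 l01.le, hcomapmap P2 (l01.le.trans l12.le)] at this
    exact l12.ne this
  have hbotlt : (⊥ : Ideal A) < P1.map mk := by
    refine lt_of_le_of_ne bot_le fun hEq => ?_
    obtain ⟨y, hy1, hy0⟩ := SetLike.exists_of_lt l01
    have : mk y ∈ P1.map mk := Ideal.mem_map_of_mem mk hy1
    rw [← hEq] at this
    rw [Submodule.mem_bot] at this
    exact hy0 (by rwa [Ideal.Quotient.eq_zero_iff_mem] at this)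
  have hmapJ : (P0 ⊔ Ideal.span {x}).map mk = Ideal.span {mk x} := by
    rw [Ideal.map_sup, Ideal.map_quotient_self, Ideal.map_span, Set.image_singleton,
      bot_sup_eq]
  have hminA : P2.map mk ∈ (Ideal.span {mk x}).minimalPrimes := by
    constructor
    · refine ⟨hP2map, ?_⟩
      rw [Ideal.span_le, Set.singleton_subset_iff]
      exact Ideal.mem_map_of_mem mk (hmin.1.2 (le_sup_right (α := Ideal B)
        (Ideal.subset_span rfl)))
    · rintro Q ⟨hQp, hQle⟩ hQP2
      have hcQ : (Q.comap mk).IsPrime := hQp.comap mk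
      have hle1 : P0 ⊔ Ideal.span {x} ≤ Q.comap mk := by
        refine sup_le ?_ ?_
        · intro a ha
          rw [Ideal.mem_comap]
          have : mk a = 0 := Ideal.Quotient.eq_zero_iff_mem.mpr ha
          rw [this]; exact Q.zero_mem
        · rw [Ideal.span_le, Set.singleton_subset_iff, SetLike.mem_coe, Ideal.mem_comap]
          exact hQle (Ideal.subset_span rfl)
      have hle2 : Q.comap mk ≤ P2 := by
        have := Ideal.comap_mono (f := mk) hQP2
        rwa [hcomapmap P2 (l01.le.trans l12.le)] at this
      have hP2le : P2 ≤ Q.comap mk := hmin.2 ⟨hcQ, hle1⟩ hle2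
      calc P2.map mk ≤ (Q.comap mk).map mk := Ideal.map_mono hP2le
        _ = Q := Ideal.map_comap_of_surjective mk hsurj Q
  haveI : IsDomain A := Ideal.Quotient.isDomain P0
  exact pit_core (mk x) (P2.map mk) (P1.map mk) ⊥ hminA hP1map Ideal.bot_prime hlt hbotlt

private lemma enat_eq_zero_of_add_two_le {a : ℕ∞} (h : a + 1 + 1 ≤ 2) : a = 0 := by
  induction a using ENat.recTopCoe with
  | top => simp at h
  | coe n =>
    have hn : n + 1 + 1 ≤ 2 := by exact_mod_cast h
    have : n = 0 := by omega
    exact_mod_cast this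

private lemma enat_eq_zero_of_add_one_le {a : ℕ∞} (h : a + 1 ≤ 1) : a = 0 := by
  induction a using ENat.recTopCoe with
  | top => simp at h
  | coe n =>
    have hn : n + 1 ≤ 1 := by exact_mod_cast h
    have : n = 0 := by omega
    exact_mod_cast this

private lemma enat_two_le_of_one_lt {a : ℕ∞} (h : 1 < a) : 2 ≤ a := by
  induction a using ENat.recTopCoe with
  | top => exact le_top
  | coe n =>
    have hn : 1 < n := by exact_mod_cast h
    have : 2 ≤ n := by omega
    exact_mod_cast this


/-- Let `R` be a Noetherian ring of dimension 2 with finitely many maximal ideals all of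
height 2, in which every height-one prime lies under only finitely many maximal ideals, and
whose set of minimal primes together with height-one primes dominating at least two minimal
primes is finite. Given a chain `q'' < q' < q` of primes, there are infinitely many height-one
primes strictly between `q''` and `q` whose only prime strictly above is `q` and whose only
prime strictly below is `q''`. -/
theorem infinite_class_between {R : Type*} [CommRing R] [IsNoetherianRing R]
    (hdim : ringKrullDim R = 2)
    (hfinmax : {I : Ideal R | I.IsMaximal}.Finite)
    (hmaxht : ∀ (I : Ideal R) (hI : I.IsMaximal),
      Order.height (⟨I, hI.isPrime⟩ : PrimeSpectrum R) = 2)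
    (hfinover : ∀ p : PrimeSpectrum R, Order.height p = 1 →
      {I : Ideal R | I.IsMaximal ∧ p.asIdeal ≤ I}.Finite)
    (hHfin : {p : PrimeSpectrum R | Order.height p = 0 ∨ (Order.height p = 1 ∧
      ∃ a b : PrimeSpectrum R, Order.height a = 0 ∧ Order.height b = 0 ∧ a ≠ b ∧
        a ≤ p ∧ b ≤ p)}.Finite)
    (q q' q'' : PrimeSpectrum R) (h1 : q'' < q') (h2 : q' < q) :
    {p : PrimeSpectrum R | Order.height p = 1 ∧ q'' < p ∧ p < q ∧
      (∀ w : PrimeSpectrum R, p < w → w = q) ∧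
      (∀ w : PrimeSpectrum R, w < p → w = q'')}.Infinite := by
  classical
  have hstep : ∀ a b : PrimeSpectrum R, a < b →
      Order.height a + 1 ≤ Order.height b := by
    intro a b hab
    rw [Order.height_eq_iSup_lt_height b]
    exact le_iSup₂_of_le a hab le_rfl
  have hle2 : ∀ p : PrimeSpectrum R, Order.height p ≤ 2 := by
    intro p
    have h := Order.height_le_krullDim p
    rw [show Order.krullDim (PrimeSpectrum R) = ringKrullDim R from rfl, hdim] at h
    exact WithBot.coe_le_coe.mp h
  have ha := hstep q'' q' h1
  have hb := hstep q' q h2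
  have h''0 : Order.height q'' = 0 :=
    enat_eq_zero_of_add_two_le (((add_le_add_left ha 1).trans hb).trans (hle2 q))
  have hq2ge : 2 ≤ Order.height q := by
    calc (2 : ℕ∞) = 1 + 1 := by norm_num
      _ ≤ (Order.height q'' + 1) + 1 := by
          exact add_le_add_left (le_add_self) 1
      _ ≤ Order.height q' + 1 := add_le_add_left ha 1
      _ ≤ Order.height q := hb
  have hq2 : Order.height q = 2 := le_antisymm (hle2 q) hq2ge
  have hmax2 : ∀ w : PrimeSpectrum R, 2 ≤ Order.height w → w.asIdeal.IsMaximal := by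
    intro w hw
    obtain ⟨mI, hmI, hlem⟩ := w.asIdeal.exists_le_maximal w.2.ne_top
    rcases eq_or_lt_of_le (show w ≤ (⟨mI, hmI.isPrime⟩ : PrimeSpectrum R) from hlem)
      with hEq | hLt
    · rw [hEq]; exact hmI
    · exfalso
      have h3 : 2 + 1 ≤ Order.height (⟨mI, hmI.isPrime⟩ : PrimeSpectrum R) :=
        le_trans (add_le_add_left hw 1) (hstep w _ hLt)
      rw [hmaxht mI hmI] at h3
      have : (3 : ℕ) ≤ 2 := by exact_mod_cast h3
      omega
  have hqmax : q.asIdeal.IsMaximal := hmax2 q hq2ge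
  by_contra hinf
  rw [Set.not_infinite] at hinf
  set H : Set (PrimeSpectrum R) := {p : PrimeSpectrum R | Order.height p = 0 ∨
    (Order.height p = 1 ∧ ∃ a b : PrimeSpectrum R, Order.height a = 0 ∧
      Order.height b = 0 ∧ a ≠ b ∧ a ≤ p ∧ b ≤ p)} with hH
  set T : Set (PrimeSpectrum R) := {p : PrimeSpectrum R | Order.height p = 1 ∧ q'' < p ∧
    p < q ∧ (∀ w : PrimeSpectrum R, p < w → w = q) ∧
    (∀ w : PrimeSpectrum R, w < p → w = q'')} with hT
  set S : Set (PrimeSpectrum R) :=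
    (({r : PrimeSpectrum R | r.asIdeal.IsMaximal ∧ r ≠ q} ∪ H) ∪ T) ∪ {q''} with hSdef
  have hmaxfin : {r : PrimeSpectrum R | r.asIdeal.IsMaximal ∧ r ≠ q}.Finite := by
    have hinj : Function.Injective (PrimeSpectrum.asIdeal (R := R)) := by
      intro a b hab; exact PrimeSpectrum.ext hab
    have hpre : (PrimeSpectrum.asIdeal (R := R) ⁻¹' {I : Ideal R | I.IsMaximal}).Finite :=
      hfinmax.preimage hinj.injOn
    exact hpre.subset fun r hr => hr.1
  have hSfin : S.Finite :=
    (((hmaxfin.union hHfin).union hinf).union (Set.finite_singleton q''))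
  have hSnotle : ∀ r ∈ S, ¬ q.asIdeal ≤ r.asIdeal := by
    rintro r (((⟨hrm, hrne⟩ | hrH) | hrT) | hrq) hqle
    · exact hrne (PrimeSpectrum.ext (hqmax.eq_of_le r.2.ne_top hqle).symm)
    · have hle1 : Order.height r ≤ 1 := by
        rcases hrH with h0 | ⟨h1', _⟩
        · rw [h0]; norm_num
        · rw [h1']
      have := Order.height_mono (show q ≤ r from hqle)
      rw [hq2] at this
      have h32 : (2 : ℕ∞) ≤ 1 := this.trans hle1
      have : (2 : ℕ) ≤ 1 := by exact_mod_cast h32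
      omega
    · exact absurd ((show q ≤ r from hqle).trans_lt hrT.2.2.1) (lt_irrefl q)
    · rw [Set.mem_singleton_iff] at hrq
      subst hrq
      exact absurd ((show q ≤ r from hqle).trans_lt (h1.trans h2)) (lt_irrefl _)
  have hex : ∃ x ∈ q.asIdeal, ∀ r ∈ S, x ∉ r.asIdeal := by
    by_contra hcon
    push_neg at hcon
    have hsub : (q.asIdeal : Set R) ⊆
        ⋃ r ∈ (hSfin.toFinset : Set (PrimeSpectrum R)), ((r.asIdeal : Ideal R) : Set R) := by
      intro x hx
      obtain ⟨r, hrS, hxr⟩ := hcon x hx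
      exact Set.mem_biUnion (hSfin.mem_toFinset.mpr hrS) hxr
    obtain ⟨r, hrs, hrle⟩ :=
      (Ideal.subset_union_prime (s := hSfin.toFinset)
        (f := fun r : PrimeSpectrum R => r.asIdeal) q'' q''
        (fun r _ _ _ => r.2)).mp hsub
    exact hSnotle r (hSfin.mem_toFinset.mp hrs) hrle
  obtain ⟨x, hxq, hxnot⟩ := hex
  have hq''S : q'' ∈ S := Or.inr rfl
  have hJle : q''.asIdeal ⊔ Ideal.span {x} ≤ q.asIdeal := by
    refine sup_le ?_ ?_
    · exact ((PrimeSpectrum.asIdeal_lt_asIdeal q'' q).mpr (h1.trans h2)).le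
    · rw [Ideal.span_le, Set.singleton_subset_iff]; exact hxq
  haveI : q.asIdeal.IsPrime := q.2
  obtain ⟨pI, hpmin, hple⟩ := Ideal.exists_minimalPrimes_le hJle
  haveI hpIp : pI.IsPrime := hpmin.1.1
  set p : PrimeSpectrum R := ⟨pI, hpIp⟩ with hpdef
  have hq''p : q''.asIdeal ≤ pI := le_trans le_sup_left hpmin.1.2
  have hxp : x ∈ pI := hpmin.1.2 (le_sup_right (α := Ideal R) (Ideal.subset_span rfl))
  have hq''lt : q'' < p := by
    rw [← PrimeSpectrum.asIdeal_lt_asIdeal]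
    exact lt_of_le_of_ne hq''p fun hEq => hxnot q'' hq''S (hEq ▸ hxp)
  have hpq : p < q := by
    rcases lt_or_eq_of_le (show p ≤ q from hple) with h | h
    · exact h
    · exfalso
      have hmin2 : q.asIdeal ∈ (q''.asIdeal ⊔ Ideal.span {x}).minimalPrimes := by
        have : pI = q.asIdeal := congrArg PrimeSpectrum.asIdeal h
        rw [← this]; exact hpmin
      exact pit_three x q''.asIdeal q'.asIdeal q.asIdeal q''.2 q'.2 q.2
        ((PrimeSpectrum.asIdeal_lt_asIdeal q'' q').mpr h1)
        ((PrimeSpectrum.asIdeal_lt_asIdeal q' q).mpr h2) hmin2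
  have hp1 : Order.height p = 1 := by
    have hge : 1 ≤ Order.height p := by
      have := hstep q'' p hq''lt
      rwa [h''0, zero_add] at this
    have hle : Order.height p ≤ 1 := by
      by_contra hc
      have h2le : 2 ≤ Order.height p := enat_two_le_of_one_lt (not_le.mp hc)
      exact hpq.ne (PrimeSpectrum.ext ((hmax2 p h2le).eq_of_le q.2.ne_top hple))
    exact le_antisymm hle hge
  have habove : ∀ w, p < w → w = q := by
    intro w hpw
    have h2le : 2 ≤ Order.height w := by
      have := hstep p w hpw
      rw [hp1] at this
      calc (2 : ℕ∞) = 1 + 1 := by norm_num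
        _ ≤ Order.height w := this
    have hwmax := hmax2 w h2le
    by_contra hne
    have hwS : w ∈ S := Or.inl (Or.inl (Or.inl ⟨hwmax, hne⟩))
    exact hxnot w hwS ((show p ≤ w from hpw.le) hxp)
  have hbelow : ∀ w, w < p → w = q'' := by
    intro w hwp
    by_contra hne
    have hw0 : Order.height w = 0 := by
      have := hstep w p hwp
      rw [hp1] at this
      exact enat_eq_zero_of_add_one_le this
    have hpH : p ∈ H := Or.inr ⟨hp1, w, q'', hw0, h''0, hne, hwp.le,
      (show q'' ≤ p from hq''lt.le)⟩
    have hpS : p ∈ S := Or.inl (Or.inl (Or.inr hpH))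
    exact hxnot p hpS hxp
  have hpT : p ∈ T := ⟨hp1, hq''lt, hpq, habove, hbelow⟩
  have hpS : p ∈ S := Or.inl (Or.inr hpT)
  exact hxnot p hpS hxp
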